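/- arXiv:1408.5604 — 3 statements merged into one kernel-verified Lean document; each statement's English description precedes it below -/
import Mathlib

section
/- Let S and Σ be p×p positive definite real symmetric matrices with 0 ≺ Σ ≺ 2S (in the Loewner order). Then for every nonzero real symmetric p×p matrix A, tr((2S - Σ) Σ⁻¹ A Σ⁻¹ A Σ⁻¹) > 0. In particular the function ℓ(Σ) = -log det Σ - tr(S Σ⁻¹) is strictly concave on the set {Σ : 0 ≺ Σ ≺ 2S}. -/
set_option maxHeartbeats 1000000

open Matrix

section AuxLemmas

variable {n : Type*} [Fintype n] [DecidableEq n]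


variable {n : Type*} [Fintype n] [DecidableEq n]

lemma myDiagPos {M : Matrix n n ℝ} (hM : M.PosDef) (i : n) : 0 < M i i := by
  have h := hM.dotProduct_mulVec_pos (x := Pi.single i 1) (by
    intro h
    have := congrFun h i
    simp at this)
  simpa [mulVec_single, dotProduct_single, star_trivial, dotProduct, Pi.single_apply,
    Finset.sum_ite_eq'] using h

lemma myPosDefConj {M B : Matrix n n ℝ} (hM : M.PosDef) (hB : IsUnit B.det) :
    (star B * M * B).PosDef := by
  refine Matrix.PosDef.of_dotProduct_mulVec_pos ?_ ?_
  · have hM1 := hM.1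
    simp only [Matrix.star_eq_conjTranspose, Matrix.IsHermitian] at *
    rw [conjTranspose_mul, conjTranspose_mul, conjTranspose_conjTranspose, hM1, mul_assoc]
  · intro v hv
    have hBv : B *ᵥ v ≠ 0 := by
      intro h
      apply hv
      have := congrArg (fun w => B⁻¹ *ᵥ w) h
      simpa [mulVec_mulVec, Matrix.nonsing_inv_mul B hB] using this
    have h := hM.dotProduct_mulVec_pos hBv
    have key : star v ⬝ᵥ (star B * M * B) *ᵥ v = star (B *ᵥ v) ⬝ᵥ M *ᵥ (B *ᵥ v) := by
      simp only [star_trivial, Matrix.star_eq_conjTranspose,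
        Matrix.conjTranspose_eq_transpose_of_trivial, ← mulVec_mulVec]
      rw [Matrix.dotProduct_mulVec, Matrix.vecMul_transpose]
    rw [key]
    exact h



lemma myPosDefOfPosSemidef {M : Matrix n n ℝ} (hM : M.PosSemidef) (hd : M.det ≠ 0) :
    M.PosDef := by
  refine Matrix.PosDef.of_dotProduct_mulVec_pos hM.1 fun v hv => ?_
  rcases lt_or_eq_of_le (hM.dotProduct_mulVec_nonneg v) with h | h
  · exact h
  · exfalso
    apply hv
    have hMv : M *ᵥ v = 0 := (hM.dotProduct_mulVec_zero_iff v).mp h.symm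
    have := congrArg (fun w => M⁻¹ *ᵥ w) hMv
    simpa [mulVec_mulVec, Matrix.nonsing_inv_mul M (isUnit_iff_ne_zero.mpr hd)] using this

open scoped MatrixOrder in
lemma mySqrtExists {M : Matrix n n ℝ} (hM : M.PosDef) :
    ∃ e : Matrix n n ℝ, eᵀ = e ∧ e * e = M ∧ e.PosDef := by
  refine ⟨CFC.sqrt M, ?_, CFC.sqrt_mul_sqrt_self M hM.posSemidef.nonneg, ?_⟩
  · have := (CFC.sqrt_nonneg M).posSemidef.1
    rwa [Matrix.IsHermitian, Matrix.conjTranspose_eq_transpose_of_trivial] at this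
  · apply myPosDefOfPosSemidef (CFC.sqrt_nonneg M).posSemidef
    intro h
    have h2 : CFC.sqrt M * CFC.sqrt M = M := CFC.sqrt_mul_sqrt_self M hM.posSemidef.nonneg
    have := hM.det_pos
    rw [← h2, det_mul, h, mul_zero] at this
    exact lt_irrefl _ this

open scoped MatrixOrder in
lemma mySqrtExists' {M : Matrix n n ℝ} (hM : M.PosSemidef) :
    ∃ q : Matrix n n ℝ, qᵀ = q ∧ q * q = M := by
  refine ⟨CFC.sqrt M, ?_, CFC.sqrt_mul_sqrt_self M hM.nonneg⟩
  have := (CFC.sqrt_nonneg M).posSemidef.1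
  rwa [Matrix.IsHermitian, Matrix.conjTranspose_eq_transpose_of_trivial] at this

lemma myComboPosDef {x y : Matrix n n ℝ} (hx : x.PosDef) (hy : y.PosDef) {s t : ℝ}
    (hs : 0 ≤ s) (ht : 0 ≤ t) (hst : s + t = 1) : (s • x + t • y).PosDef := by
  refine Matrix.PosDef.of_dotProduct_mulVec_pos ?_ ?_
  · have h1 : xᵀ = x := by
      rw [← Matrix.conjTranspose_eq_transpose_of_trivial]; exact hx.1
    have h2 : yᵀ = y := by
      rw [← Matrix.conjTranspose_eq_transpose_of_trivial]; exact hy.1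
    simp [Matrix.IsHermitian, conjTranspose_add, conjTranspose_smul,
      Matrix.conjTranspose_eq_transpose_of_trivial, transpose_add, transpose_smul, h1, h2]
  · intro v hv
    have key : star v ⬝ᵥ (s • x + t • y) *ᵥ v
        = s * (star v ⬝ᵥ x *ᵥ v) + t * (star v ⬝ᵥ y *ᵥ v) := by
      simp [add_mulVec, smul_mulVec, dotProduct_add, dotProduct_smul, smul_eq_mul]
    rw [key]
    have h1 := hx.dotProduct_mulVec_pos hv
    have h2 := hy.dotProduct_mulVec_pos hv
    rcases hs.eq_or_lt with h | h
    · have : t = 1 := by linarith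
      rw [← h, this]; simpa using h2
    · nlinarith

omit [DecidableEq n] in
lemma myTraceSq (N : Matrix n n ℝ) : (Nᵀ * N).trace = ∑ i, ∑ j, (N j i)^2 := by
  simp [Matrix.trace, Matrix.diag, Matrix.mul_apply, sq]

lemma myTracePos {P Q : Matrix n n ℝ} (hP : P.PosDef) (hQ : Q.PosSemidef) (hQ0 : Q ≠ 0) :
    0 < (P * Q).trace := by
  obtain ⟨q, hqH, hq⟩ := mySqrtExists' hQ
  obtain ⟨e, heH, he, hePD⟩ := mySqrtExists hP
  set N := e * q with hNdef
  have hkey : (P * Q).trace = (Nᵀ * N).trace := by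
    have hN : Nᵀ * N = q * (e * e * q) := by
      rw [hNdef, transpose_mul, hqH, heH]; simp only [mul_assoc]
    rw [hN, Matrix.trace_mul_comm q (e*e*q), ← he, ← hq]
    congr 1
    simp only [mul_assoc]
  rw [hkey, myTraceSq]
  have hN0 : N ≠ 0 := by
    intro h
    apply hQ0
    have hedet : IsUnit e.det := isUnit_iff_ne_zero.mpr (by
      intro hz
      have := hePD.det_pos
      rw [hz] at this; exact lt_irrefl _ this)
    have hq0 : q = 0 := by
      have := congrArg (fun w => e⁻¹ * w) h
      simpa [hNdef, ← mul_assoc, Matrix.nonsing_inv_mul e hedet] using this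
    rw [← hq, hq0, mul_zero]
  obtain ⟨i0, j0, hij⟩ : ∃ i j, N i j ≠ 0 := by
    by_contra h
    push_neg at h
    exact hN0 (by ext i j; simp [h i j])
  apply Finset.sum_pos' (fun i _ => Finset.sum_nonneg fun j _ => sq_nonneg _)
  exact ⟨j0, Finset.mem_univ _,
    Finset.sum_pos' (fun j _ => sq_nonneg _) ⟨i0, Finset.mem_univ _, by positivity⟩⟩


noncomputable def phi (μ c : ℝ) : ℝ → ℝ := fun t => -Real.log (1 + t*μ) - c * (1 + t*μ)⁻¹
noncomputable def phi' (μ c : ℝ) : ℝ → ℝ := fun t => -((1 + t*μ)⁻¹ * μ) - c * (-μ / (1 + t*μ)^2)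
noncomputable def phi'' (μ c : ℝ) : ℝ → ℝ := fun t => μ^2 * ((1 + t*μ)^2)⁻¹ - 2*c*μ^2 * ((1 + t*μ)^3)⁻¹

lemma hasDerivAt_const_add_mul (μ t : ℝ) : HasDerivAt (fun s : ℝ => 1 + s*μ) μ t := by
  simpa using ((hasDerivAt_id t).mul_const μ).const_add 1

lemma hasDerivAt_phi (μ c t : ℝ) (h : 1 + t*μ ≠ 0) :
    HasDerivAt (phi μ c) (phi' μ c t) t := by
  have hu := hasDerivAt_const_add_mul μ t
  have h1 : HasDerivAt (fun s => Real.log (1+s*μ)) ((1+t*μ)⁻¹ * μ) t :=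
    by have := (Real.hasDerivAt_log h).comp t hu; exact this
  have h2 : HasDerivAt (fun s : ℝ => (1+s*μ)⁻¹) (-μ / (1+t*μ)^2) t := hu.inv h
  exact (h1.neg).sub (h2.const_mul c)

lemma hasDerivAt_phi' (μ c t : ℝ) (h : 1 + t*μ ≠ 0) :
    HasDerivAt (phi' μ c) (phi'' μ c t) t := by
  have hu := hasDerivAt_const_add_mul μ t
  have h2 : HasDerivAt (fun s : ℝ => (1+s*μ)⁻¹) (-μ / (1+t*μ)^2) t := hu.inv h
  have hsq : HasDerivAt (fun s : ℝ => (1+s*μ)^2) (2*(1+t*μ)*μ) t := by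
    have := hu.fun_pow 2
    simpa using this
  have h3 : HasDerivAt (fun s : ℝ => ((1+s*μ)^2)⁻¹) (-(2*(1+t*μ)*μ) / ((1+t*μ)^2)^2) t :=
    hsq.inv (pow_ne_zero 2 h)
  have key : HasDerivAt (phi' μ c)
      (-((-μ / (1+t*μ)^2) * μ) - c * ((-μ) * ((-(2*(1+t*μ)*μ)) / ((1+t*μ)^2)^2))) t := by
    apply HasDerivAt.sub
    · exact (h2.mul_const μ).neg
    · show HasDerivAt (fun s : ℝ => c * (-μ / (1+s*μ)^2)) _ t
      rw [show (fun s : ℝ => c * (-μ / (1+s*μ)^2))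
          = fun s : ℝ => c * ((-μ) * ((1+s*μ)^2)⁻¹) from by
        funext s; rw [div_eq_mul_inv, neg_mul]]
      exact (h3.const_mul (-μ)).const_mul c
  convert key using 1
  unfold phi''
  field_simp

lemma phi_strictConcave {μ c : ℝ} (hμ : μ ≠ 0) (hpos : ∀ t ∈ Set.Icc (0:ℝ) 1, 0 < 1 + t*μ)
    (hlt : ∀ t ∈ Set.Icc (0:ℝ) 1, 1 + t*μ < 2*c) :
    StrictConcaveOn ℝ (Set.Icc (0:ℝ) 1) (phi μ c) := by
  have hOopen : IsOpen {t : ℝ | 0 < 1 + t*μ} :=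
    isOpen_lt continuous_const (by continuity)
  apply strictConcaveOn_of_deriv2_neg (convex_Icc 0 1)
  · intro t ht
    exact ((hasDerivAt_phi μ c t (hpos t ht).ne').continuousAt).continuousWithinAt
  · intro t ht
    rw [interior_Icc] at ht
    have htIcc : t ∈ Set.Icc (0:ℝ) 1 := ⟨ht.1.le, ht.2.le⟩
    have htO : t ∈ {t : ℝ | 0 < 1 + t*μ} := hpos t htIcc
    have hEq : deriv (phi μ c) =ᶠ[nhds t] phi' μ c := by
      filter_upwards [hOopen.mem_nhds htO] with s hs
      exact (hasDerivAt_phi μ c s (ne_of_gt hs)).deriv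
    have h2 : deriv^[2] (phi μ c) t = phi'' μ c t := by
      rw [Function.iterate_succ_apply', Function.iterate_one, hEq.deriv_eq]
      exact (hasDerivAt_phi' μ c t (hpos t htIcc).ne').deriv
    rw [h2]
    have hu : 0 < 1 + t*μ := hpos t htIcc
    have h2c : 1 + t*μ < 2*c := hlt t htIcc
    have hform : phi'' μ c t = μ^2 * ((1 + t*μ) - 2*c) / (1 + t*μ)^3 := by
      unfold phi''
      field_simp
    rw [hform]
    apply div_neg_of_neg_of_pos
    · exact mul_neg_of_pos_of_neg (by positivity) (by linarith)
    · positivity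

lemma phi_concave {μ c : ℝ} (hpos : ∀ t ∈ Set.Icc (0:ℝ) 1, 0 < 1 + t*μ)
    (hlt : ∀ t ∈ Set.Icc (0:ℝ) 1, 1 + t*μ < 2*c) :
    ConcaveOn ℝ (Set.Icc (0:ℝ) 1) (phi μ c) := by
  rcases eq_or_ne μ 0 with h | h
  · have : phi μ c = fun _ => -(0:ℝ) - c * 1⁻¹ := by
      funext t; simp [phi, h, Real.log_one]
    rw [this]
    exact concaveOn_const _ (convex_Icc 0 1)
  · exact (phi_strictConcave h hpos hlt).concaveOn

lemma myConcaveSum {ι : Type*} (s : Finset ι) (f : ι → ℝ → ℝ)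
    (hf : ∀ i ∈ s, ConcaveOn ℝ (Set.Icc (0:ℝ) 1) (f i)) :
    ConcaveOn ℝ (Set.Icc (0:ℝ) 1) (fun t => ∑ i ∈ s, f i t) := by
  induction s using Finset.cons_induction with
  | empty => simpa using concaveOn_const 0 (convex_Icc (0:ℝ) 1)
  | cons a s ha ih =>
    simp only [Finset.sum_cons]
    exact (hf a (Finset.mem_cons_self a s)).add
      (ih fun i hi => hf i (Finset.mem_cons_of_mem hi))

end AuxLemmas

theorem hessian_trace_pos_and_strictConcave {p : ℕ}
    (S : Matrix (Fin p) (Fin p) ℝ) (hS : S.PosDef) :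
    (∀ Sig : Matrix (Fin p) (Fin p) ℝ, Sig.PosDef → ((2 : ℝ) • S - Sig).PosDef →
      ∀ A : Matrix (Fin p) (Fin p) ℝ, A.IsSymm → A ≠ 0 →
        0 < (((2 : ℝ) • S - Sig) * Sig⁻¹ * A * Sig⁻¹ * A * Sig⁻¹).trace) ∧
    StrictConcaveOn ℝ
      {Sig : Matrix (Fin p) (Fin p) ℝ | Sig.PosDef ∧ ((2 : ℝ) • S - Sig).PosDef}
      (fun Sig => - Real.log Sig.det - (S * Sig⁻¹).trace) := by
  constructor
  · -- Part 1: trace positivity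
    intro Sig hSig hM A hAs hA0
    have hSinv : Sig⁻¹.PosDef := hSig.inv
    have hAH : Aᴴ = A := by
      rw [Matrix.conjTranspose_eq_transpose_of_trivial]; exact hAs
    have hQ : (A * Sig⁻¹ * A).PosSemidef := by
      have := hSinv.posSemidef.conjTranspose_mul_mul_same A
      rwa [hAH] at this
    have hQ0 : A * Sig⁻¹ * A ≠ 0 := by
      intro h
      apply hA0
      have hv : ∀ v : Fin p → ℝ, A *ᵥ v = 0 := by
        intro v
        by_contra hAv
        have h1 := hSinv.dotProduct_mulVec_pos hAv
        have key : star (A *ᵥ v) ⬝ᵥ Sig⁻¹ *ᵥ (A *ᵥ v) = star v ⬝ᵥ (A * Sig⁻¹ * A) *ᵥ v := by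
          simp only [star_trivial, ← mulVec_mulVec]
          rw [Matrix.dotProduct_mulVec v, ← Matrix.mulVec_transpose, hAs]
        rw [key, h] at h1
        simp at h1
      ext i j
      have := congrFun (hv (Pi.single j 1)) i
      simpa [mulVec_single] using this
    have hP : (Sig⁻¹ * ((2:ℝ) • S - Sig) * Sig⁻¹).PosDef := by
      have hdet : IsUnit (Sig⁻¹).det := isUnit_iff_ne_zero.mpr hSinv.det_pos.ne'
      have := myPosDefConj hM hdet
      rwa [show star Sig⁻¹ = Sig⁻¹ from by
        rw [Matrix.star_eq_conjTranspose]; exact hSinv.1] at this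
    have h2 : (((2:ℝ) • S - Sig) * Sig⁻¹ * A * Sig⁻¹ * A * Sig⁻¹).trace
        = ((Sig⁻¹ * ((2:ℝ) • S - Sig) * Sig⁻¹) * (A * Sig⁻¹ * A)).trace := by
      rw [Matrix.trace_mul_comm]
      congr 1
      simp only [← mul_assoc]
    rw [h2]
    exact myTracePos hP hQ hQ0
  · -- Part 2: strict concavity
    constructor
    · -- convexity of the set
      intro x hx y hy s t hs ht hst
      refine ⟨myComboPosDef hx.1 hy.1 hs ht hst, ?_⟩
      have hrw : (2:ℝ)•S - (s•x + t•y) = s•((2:ℝ)•S - x) + t•((2:ℝ)•S - y) := by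
        calc (2:ℝ)•S - (s•x + t•y) = (s+t)•((2:ℝ)•S) - (s•x + t•y) := by rw [hst, one_smul]
          _ = s•((2:ℝ)•S - x) + t•((2:ℝ)•S - y) := by
              rw [add_smul, smul_sub, smul_sub]; abel
      rw [hrw]
      exact myComboPosDef hx.2 hy.2 hs ht hst
    · intro x hx y hy hxy a b ha hb hab
      obtain ⟨hx1, hx2⟩ := hx
      obtain ⟨hy1, hy2⟩ := hy
      obtain ⟨R, hRH, hRR, hRPD⟩ := mySqrtExists hx1
      have hRdet : IsUnit R.det := isUnit_iff_ne_zero.mpr hRPD.det_pos.ne'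
      set Ri := R⁻¹ with hRidef
      have hRiR : Ri * R = 1 := nonsing_inv_mul R hRdet
      have hRRi : R * Ri = 1 := mul_nonsing_inv R hRdet
      have hRiH : Riᵀ = Ri := by rw [hRidef, transpose_nonsing_inv, hRH]
      have hC : (Ri * (y - x) * Ri).IsHermitian := by
        have h1 : (y - x)ᵀ = y - x := by
          rw [transpose_sub]
          rw [show yᵀ = y from by
            rw [← Matrix.conjTranspose_eq_transpose_of_trivial]; exact hy1.1]
          rw [show xᵀ = x from by
            rw [← Matrix.conjTranspose_eq_transpose_of_trivial]; exact hx1.1]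
        rw [Matrix.IsHermitian, Matrix.conjTranspose_eq_transpose_of_trivial,
          transpose_mul, transpose_mul, hRiH, h1, ← mul_assoc]
      set C := Ri * (y - x) * Ri with hCdef
      set V := (hC.eigenvectorUnitary : Matrix (Fin p) (Fin p) ℝ) with hVdef
      set μ := hC.eigenvalues with hμdef
      have hVVs : V * star V = 1 := Matrix.mem_unitaryGroup_iff.mp hC.eigenvectorUnitary.2
      have hVV : star V * V = 1 := Matrix.mem_unitaryGroup_iff'.mp hC.eigenvectorUnitary.2
      have hspec : C = V * diagonal μ * star V := by
        have := hC.spectral_theorem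
        simpa [RCLike.ofReal_real_eq_id] using this
      set P := R * V with hPdef
      have hstarR : star R = R := by
        rw [Matrix.star_eq_conjTranspose, Matrix.conjTranspose_eq_transpose_of_trivial, hRH]
      have hstarRi : star Ri = Ri := by
        rw [Matrix.star_eq_conjTranspose, Matrix.conjTranspose_eq_transpose_of_trivial, hRiH]
      have hPstar : star P = star V * R := by rw [hPdef, Matrix.star_mul, hstarR]
      have hRCR : R * C * R = y - x := by
        rw [hCdef, show R * (Ri * (y-x) * Ri) * R = (R * Ri) * (y-x) * (Ri * R) from by
          simp only [mul_assoc], hRRi, hRiR, one_mul, mul_one]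
      have hPP : P * star P = x := by
        rw [hPdef, hPstar, show R*V*(star V * R) = R * (V * star V) * R from by
          simp only [mul_assoc], hVVs, mul_one, hRR]
      have hSigma : ∀ t : ℝ, x + t • (y - x) = P * diagonal (fun i => 1 + t * μ i) * star P := by
        intro t
        have hdiag : diagonal (fun i => 1 + t * μ i) = 1 + t • diagonal μ := by
          rw [← diagonal_one, ← diagonal_smul, ← diagonal_add]
          congr 1
        have h1 : P * (1 : Matrix (Fin p) (Fin p) ℝ) * star P = x := by rw [mul_one, hPP]
        have h2 : P * (t • diagonal μ) * star P = t • (y - x) := by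
          rw [Matrix.mul_smul, Matrix.smul_mul]
          congr 1
          rw [hPdef, hPstar, show R*V*diagonal μ*(star V * R) = R * (V * diagonal μ * star V) * R
            from by simp only [mul_assoc], ← hspec, hRCR]
        symm
        calc P * diagonal (fun i => 1+t*μ i) * star P
            = P * 1 * star P + P * (t • diagonal μ) * star P := by
              rw [hdiag, mul_add, add_mul]
          _ = x + t • (y - x) := by rw [h1, h2]
      have hdet : ∀ t : ℝ, (x + t • (y-x)).det = x.det * ∏ i, (1 + t * μ i) := by
        intro t
        rw [hSigma t, det_mul, det_mul, det_diagonal]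
        rw [show P.det * (∏ i, (1+t*μ i)) * (star P).det
            = (P.det * (star P).det) * ∏ i, (1+t*μ i) from by ring, ← det_mul, hPP]
      have hinv : ∀ t : ℝ, (∀ i, 1 + t * μ i ≠ 0) →
          (x + t•(y-x))⁻¹ = (Ri * V) * diagonal (fun i => (1 + t*μ i)⁻¹) * (star V * Ri) := by
        intro t h0
        apply inv_eq_right_inv
        rw [hSigma t, hPstar, hPdef]
        have e1 : star V * R * (Ri * V) = 1 := by
          rw [show star V * R * (Ri * V) = star V * (R * Ri) * V from by simp only [mul_assoc],
            hRRi, mul_one, hVV]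
        have e2 : diagonal (fun i => 1+t*μ i) * diagonal (fun i => (1+t*μ i)⁻¹)
            = (1 : Matrix (Fin p) (Fin p) ℝ) := by
          rw [diagonal_mul_diagonal, ← diagonal_one]
          exact congrArg diagonal (funext fun i => mul_inv_cancel₀ (h0 i))
        calc R*V*diagonal (fun i => 1+t*μ i)*(star V*R) * (Ri*V*diagonal (fun i => (1+t*μ i)⁻¹)*(star V*Ri))
            = R*V*diagonal (fun i => 1+t*μ i)*((star V*R*(Ri*V))*(diagonal (fun i => (1+t*μ i)⁻¹)*(star V*Ri))) := by
              simp only [mul_assoc]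
          _ = R*V*(diagonal (fun i => 1+t*μ i)*diagonal (fun i => (1+t*μ i)⁻¹))*(star V*Ri) := by
              rw [e1, one_mul]; simp only [mul_assoc]
          _ = 1 := by
              rw [e2, mul_one, show R*V*(star V*Ri) = R*(V*star V)*Ri from by
                simp only [mul_assoc], hVVs, mul_one, hRRi]
      set W := (star V * Ri) * S * (Ri * V) with hWdef
      have hGunit : IsUnit (Ri * V).det := by
        have h1 : (Ri * V) * (star V * R) = 1 := by
          rw [show (Ri*V)*(star V*R) = Ri*(V*star V)*R from by simp only [mul_assoc],
            hVVs, mul_one, hRiR]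
        have h2 : (Ri * V).det * (star V * R).det = 1 := by rw [← det_mul, h1, det_one]
        exact IsUnit.of_mul_eq_one _ h2
      have hstarG : star (Ri * V) = star V * Ri := by rw [Matrix.star_mul, hstarRi]
      have hW : W.PosDef := by
        have := myPosDefConj hS hGunit
        rwa [hstarG] at this
      have htrace : ∀ t : ℝ, (∀ i, 1 + t*μ i ≠ 0) →
          (S * (x + t•(y-x))⁻¹).trace = ∑ i, W i i * (1 + t*μ i)⁻¹ := by
        intro t h0
        rw [hinv t h0]
        rw [show S * ((Ri*V) * diagonal (fun i => (1+t*μ i)⁻¹) * (star V*Ri))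
            = (S * ((Ri*V) * diagonal (fun i => (1+t*μ i)⁻¹))) * (star V * Ri) from by
          simp only [mul_assoc], Matrix.trace_mul_comm]
        rw [show (star V*Ri) * (S * ((Ri*V) * diagonal (fun i => (1+t*μ i)⁻¹)))
            = W * diagonal (fun i => (1+t*μ i)⁻¹) from by rw [hWdef]; simp only [mul_assoc]]
        simp [Matrix.trace, Matrix.diag, Matrix.mul_diagonal]
      have hGdiag : ∀ t : ℝ, star (Ri*V) * (x + t•(y-x)) * (Ri*V) = diagonal (fun i => 1 + t*μ i) := by
        intro t
        rw [hSigma t, hstarG, hPstar, hPdef]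
        calc (star V*Ri) * (R*V*diagonal (fun i => 1+t*μ i)*(star V*R)) * (Ri*V)
            = (star V * (Ri*R) * V) * diagonal (fun i => 1+t*μ i) * (star V * (R * Ri) * V) := by
              simp only [mul_assoc]
          _ = diagonal (fun i => 1+t*μ i) := by
              rw [hRiR, hRRi, mul_one, hVV, one_mul, mul_one]
      have hcombo : ∀ t ∈ Set.Icc (0:ℝ) 1, (x + t•(y-x)).PosDef ∧ ((2:ℝ)•S - (x + t•(y-x))).PosDef := by
        intro t ht
        have h1t : (0:ℝ) ≤ 1 - t := by linarith [ht.2]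
        constructor
        · have h := myComboPosDef hx1 hy1 h1t ht.1 (by ring)
          have e : x + t•(y-x) = (1-t)•x + t•y := by module
          rw [e]; exact h
        · have h := myComboPosDef hx2 hy2 h1t ht.1 (by ring)
          have e : (2:ℝ)•S - (x + t•(y-x)) = (1-t)•((2:ℝ)•S - x) + t•((2:ℝ)•S - y) := by module
          rw [e]; exact h
      have hposdiag : ∀ t ∈ Set.Icc (0:ℝ) 1, ∀ i, 0 < 1 + t*μ i := by
        intro t ht i
        have hdiagPD : (diagonal (fun i => 1 + t*μ i)).PosDef := by
          rw [← hGdiag t]; exact myPosDefConj (hcombo t ht).1 hGunit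
        simpa using myDiagPos hdiagPD i
      have h2cdiag : ∀ t ∈ Set.Icc (0:ℝ) 1, ∀ i, 1 + t*μ i < 2 * W i i := by
        intro t ht i
        have key : star (Ri*V) * ((2:ℝ)•S - (x+t•(y-x))) * (Ri*V)
            = (2:ℝ)•W - diagonal (fun i => 1+t*μ i) := by
          rw [Matrix.mul_sub, Matrix.sub_mul, hGdiag t]
          congr 1
          rw [Matrix.mul_smul, Matrix.smul_mul, hstarG, hWdef]
        have hPDd : ((2:ℝ)•W - diagonal (fun i => 1+t*μ i)).PosDef := by
          rw [← key]; exact myPosDefConj (hcombo t ht).2 hGunit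
        have := myDiagPos hPDd i
        simp only [Matrix.sub_apply, Matrix.smul_apply, diagonal_apply_eq, smul_eq_mul] at this
        linarith
      have hcpos : ∀ i, 0 < W i i := fun i => myDiagPos hW i
      obtain ⟨i0, hi0⟩ : ∃ i, μ i ≠ 0 := by
        by_contra h
        push_neg at h
        apply hxy
        have hCz : C = 0 := by
          rw [hspec, show diagonal μ = 0 from by
            rw [show μ = fun _ => 0 from funext h, diagonal_zero]]
          simp
        have hyx : y - x = 0 := by rw [← hRCR, hCz]; simp
        exact (sub_eq_zero.mp hyx).symm
      set g := fun t : ℝ => ∑ i, phi (μ i) (W i i) t with hgdef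
      have hφ1 : ∀ i, ∀ t ∈ Set.Icc (0:ℝ) 1, 0 < 1 + t * μ i := fun i t ht => hposdiag t ht i
      have hφ2 : ∀ i, ∀ t ∈ Set.Icc (0:ℝ) 1, 1 + t * μ i < 2 * W i i :=
        fun i t ht => h2cdiag t ht i
      have hgstrict : StrictConcaveOn ℝ (Set.Icc (0:ℝ) 1) g := by
        have hsplit : g = fun t => phi (μ i0) (W i0 i0) t
            + ∑ i ∈ Finset.univ.erase i0, phi (μ i) (W i i) t := by
          funext t
          exact (Finset.add_sum_erase _ (fun i => phi (μ i) (W i i) t) (Finset.mem_univ i0)).symm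
        rw [hsplit]
        exact (phi_strictConcave hi0 (hφ1 i0) (hφ2 i0)).add_concaveOn
          (myConcaveSum _ _ fun i _ => phi_concave (hφ1 i) (hφ2 i))
      have hval : ∀ t : ℝ, (∀ i, 0 < 1 + t*μ i) →
          -Real.log (x + t•(y-x)).det - (S * (x + t•(y-x))⁻¹).trace = -Real.log x.det + g t := by
        intro t h0
        rw [hdet t, htrace t (fun i => (h0 i).ne')]
        rw [Real.log_mul hx1.det_pos.ne' (Finset.prod_pos (fun i _ => h0 i)).ne']
        rw [Real.log_prod (fun i _ => (h0 i).ne')]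
        rw [hgdef]
        simp only [phi]
        rw [Finset.sum_sub_distrib, Finset.sum_neg_distrib]
        ring
      have hb1 : b ≤ 1 := by linarith
      have key := hgstrict.2 (Set.mem_Icc.mpr (by norm_num)) (Set.mem_Icc.mpr (by norm_num))
        (show (0:ℝ) ≠ 1 by norm_num) ha hb hab
      simp only [smul_eq_mul, mul_zero, mul_one, zero_add] at key
      have hvx : -Real.log x.det - (S * x⁻¹).trace = -Real.log x.det + g 0 := by
        have := hval 0 (fun i => by simpa using hposdiag 0 (Set.mem_Icc.mpr (by norm_num)) i)
        simpa using this
      have hvy : -Real.log y.det - (S * y⁻¹).trace = -Real.log x.det + g 1 := by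
        have := hval 1 (fun i => hposdiag 1 (Set.mem_Icc.mpr (by norm_num)) i)
        rw [show x + (1:ℝ)•(y-x) = y from by module] at this
        exact this
      have hvb : -Real.log (a•x + b•y).det - (S * (a•x + b•y)⁻¹).trace = -Real.log x.det + g b := by
        have := hval b (fun i => hposdiag b (Set.mem_Icc.mpr ⟨hb.le, hb1⟩) i)
        rw [show a = 1-b from by linarith]
        rw [show x + b•(y-x) = (1-b)•x + b•y from by module] at this
        exact this
      show a • (-Real.log x.det - (S * x⁻¹).trace) + b • (-Real.log y.det - (S * y⁻¹).trace)
          < -Real.log (a•x + b•y).det - (S * (a•x + b•y)⁻¹).trace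
      rw [hvx, hvy, hvb]
      simp only [smul_eq_mul]
      have hexp : a * (-Real.log x.det + g 0) + b * (-Real.log x.det + g 1)
          = -Real.log x.det + (a * g 0 + b * g 1) := by
        rw [show a = 1-b from by linarith]; ring
      rw [hexp]
      linarith [key]
end

section
/- Let M be a nonempty subset of the cone of p×p positive definite real symmetric matrices that is closed in that cone (in the subspace topology), and let S be positive definite. Then the function ℓ̄(Σ) = log det(S Σ⁻¹) - tr(S Σ⁻¹) + p attains its maximum on M. -/
open Matrix

section Helpers

variable {p : ℕ}

lemma my_posDef_smul {A : Matrix (Fin p) (Fin p) ℝ} (hA : A.PosDef) {c : ℝ} (hc : 0 < c) :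
    (c • A).PosDef := by
  refine posDef_iff_dotProduct_mulVec.mpr ⟨?_, fun x hx => ?_⟩
  · unfold Matrix.IsHermitian
    rw [conjTranspose_smul, hA.1.eq]
    simp
  · rw [smul_mulVec, dotProduct_smul, smul_eq_mul]
    exact mul_pos hc (hA.dotProduct_mulVec_pos hx)

lemma my_isClosed_posSemidef : IsClosed {A : Matrix (Fin p) (Fin p) ℝ | A.PosSemidef} := by
  have h : {A : Matrix (Fin p) (Fin p) ℝ | A.PosSemidef}
      = {A : Matrix (Fin p) (Fin p) ℝ | Aᴴ = A} ∩
        ⋂ x : Fin p → ℝ, {A | 0 ≤ dotProduct (star x) (A *ᵥ x)} := by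
    ext A
    simp only [Set.mem_setOf_eq, Set.mem_inter_iff, Set.mem_iInter, posSemidef_iff_dotProduct_mulVec,
      Matrix.IsHermitian]
  rw [h]
  refine (isClosed_eq (continuous_id.matrix_conjTranspose) continuous_id).inter
    (isClosed_iInter fun x => isClosed_le continuous_const ?_)
  exact continuous_const.dotProduct (continuous_id.matrix_mulVec continuous_const)

lemma my_psd_diag {A : Matrix (Fin p) (Fin p) ℝ} (hA : A.PosSemidef) (i : Fin p) :
    0 ≤ A i i := by
  have := hA.dotProduct_mulVec_nonneg (Pi.single i 1)
  simpa [Matrix.mulVec_single, single_dotProduct] using this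

lemma my_psd_entry {A : Matrix (Fin p) (Fin p) ℝ} (hA : A.PosSemidef) (i j : Fin p) :
    |A i j| ≤ (A i i + A j j) / 2 := by
  have hsym : A j i = A i j := by
    have := congrFun (congrFun hA.1.eq i) j
    simpa [Matrix.conjTranspose_apply] using this
  have h1 := hA.dotProduct_mulVec_nonneg (Pi.single i 1 + Pi.single j 1)
  have h2 := hA.dotProduct_mulVec_nonneg (Pi.single i 1 - Pi.single j 1)
  simp only [star_trivial, Matrix.mulVec_add, Matrix.mulVec_sub, Matrix.mulVec_single,
    dotProduct_add, dotProduct_sub, add_dotProduct,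
    sub_dotProduct, single_dotProduct, mul_one, one_mul, MulOpposite.op_one, one_smul,
    Matrix.col_apply] at h1 h2
  rw [abs_le]
  constructor <;> nlinarith [h1, h2]

lemma my_scalar_bound {c x : ℝ} (hx : 0 < x) (h : c ≤ Real.log x - x) :
    Real.exp c ≤ x ∧ x ≤ 2 * (Real.log 2 - 1 - c) := by
  constructor
  · have hcl : c ≤ Real.log x := by linarith
    calc Real.exp c ≤ Real.exp (Real.log x) := Real.exp_le_exp.2 hcl
      _ = x := Real.exp_log hx
  · have h2 : Real.log x = Real.log 2 + Real.log (x / 2) := by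
      have hx2 : (2:ℝ) * (x / 2) = x := by ring
      have h := Real.log_mul (two_ne_zero) (by positivity : x / 2 ≠ 0)
      rw [hx2] at h
      exact h
    have h3 : Real.log (x / 2) ≤ x / 2 - 1 := Real.log_le_sub_one_of_pos (by positivity)
    linarith

variable {p : ℕ}

open scoped MatrixOrder in
lemma my_key (S Sig : Matrix (Fin p) (Fin p) ℝ) (hS : S.PosDef) (hSig : Sig.PosDef) :
    ∃ f : Fin p → ℝ, (∀ i, 0 < f i) ∧
      Real.log (S * Sig⁻¹).det - (S * Sig⁻¹).trace = ∑ i, (Real.log (f i) - f i) ∧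
      ∀ a b : ℝ, 0 < a → (∀ i, a ≤ f i) → (∀ i, f i ≤ b) →
        (Sig - b⁻¹ • S).PosSemidef ∧ (a⁻¹ • S - Sig).PosSemidef := by
  classical
  set W := CFC.sqrt S with hWdef
  have hWpsd : W.PosSemidef := (CFC.sqrt_nonneg S).posSemidef
  have hW₁ : Wᴴ = W := hWpsd.1
  have hWW : W * W = S := CFC.sqrt_mul_sqrt_self S hS.posSemidef.nonneg
  have hdetS : (0:ℝ) < S.det := hS.det_pos
  have hdetWW : W.det * W.det = S.det := by rw [← det_mul, hWW]
  have hdetW : W.det ≠ 0 := by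
    intro h; rw [h, mul_zero] at hdetWW; exact hdetS.ne' hdetWW.symm
  have hWunit : IsUnit W.det := isUnit_iff_ne_zero.mpr hdetW
  have hdetSig : (0:ℝ) < Sig.det := hSig.det_pos
  have hSigUnit : IsUnit Sig.det := isUnit_iff_ne_zero.mpr hdetSig.ne'
  have hSiginv : Sig⁻¹.PosDef := hSig.inv
  set T := W * Sig⁻¹ * W with hTdef
  have hTpsd : T.PosSemidef := by
    have := hSiginv.posSemidef.mul_mul_conjTranspose_same W
    rwa [hW₁] at this
  have hT₁ : T.IsHermitian := hTpsd.1
  set f := hT₁.eigenvalues with hfdef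
  have hdetT : T.det = ∏ i, f i := by simpa using hT₁.det_eq_prod_eigenvalues
  have hdetTpos : (0:ℝ) < T.det := by
    have : T.det = W.det * Sig⁻¹.det * W.det := by rw [hTdef, det_mul, det_mul]
    rw [this]
    have h1 : (0:ℝ) < Sig⁻¹.det := hSiginv.det_pos
    nlinarith [hdetS, hdetWW]
  have hf : ∀ i, 0 < f i := by
    intro i
    have hnn := hTpsd.eigenvalues_nonneg i
    have hne : f i ≠ 0 := by
      intro h0
      have : T.det = 0 := by
        rw [hdetT]
        exact Finset.prod_eq_zero (Finset.mem_univ i) h0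
      exact hdetTpos.ne' this
    exact lt_of_le_of_ne hnn (Ne.symm hne)
  -- unitary
  set U : Matrix (Fin p) (Fin p) ℝ := (hT₁.eigenvectorUnitary : Matrix (Fin p) (Fin p) ℝ)
    with hUdef
  have hUmem := (hT₁.eigenvectorUnitary).2
  have hU : U * star U = 1 := (Matrix.mem_unitaryGroup_iff).mp hUmem
  have hU' : star U * U = 1 := (Matrix.mem_unitaryGroup_iff').mp hUmem
  have hspec : T = U * diagonal f * star U := by
    simpa using hT₁.spectral_theorem
  have htraceT : T.trace = ∑ i, f i := by
    rw [hspec, trace_mul_cycle, hU', one_mul, trace_diagonal]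
  -- relate to S * Sig⁻¹
  have hdet : (S * Sig⁻¹).det = ∏ i, f i := by
    rw [← hdetT, det_mul, hTdef, det_mul, det_mul]
    ring_nf
    rw [← hdetWW]
    ring
  have htr : (S * Sig⁻¹).trace = ∑ i, f i := by
    rw [← htraceT, ← hWW, Matrix.mul_assoc, trace_mul_comm]
  refine ⟨f, hf, ?_, ?_⟩
  · rw [hdet, htr, Real.log_prod (fun i _ => (hf i).ne'), ← Finset.sum_sub_distrib]
  · intro a b ha hfa hfb
    have hTinv : T⁻¹ = U * diagonal (fun i => (f i)⁻¹) * star U := by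
      apply inv_eq_right_inv
      rw [hspec]
      calc U * diagonal f * star U * (U * diagonal (fun i => (f i)⁻¹) * star U)
          = U * diagonal f * (star U * U) * diagonal (fun i => (f i)⁻¹) * star U := by
            simp only [Matrix.mul_assoc]
        _ = U * (diagonal f * diagonal (fun i => (f i)⁻¹)) * star U := by
            rw [hU']; simp only [Matrix.mul_one, Matrix.mul_assoc]
        _ = 1 := by
            rw [diagonal_mul_diagonal]
            have : (fun i => f i * (f i)⁻¹) = fun _ : Fin p => (1:ℝ) := by
              funext i; exact mul_inv_cancel₀ (hf i).ne'
            rw [this, diagonal_one, Matrix.mul_one, hU]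
    have hWTW : W * T⁻¹ * W = Sig := by
      rw [hTdef, Matrix.mul_inv_rev, Matrix.mul_inv_rev, nonsing_inv_nonsing_inv _ hSigUnit]
      calc W * (W⁻¹ * (Sig * W⁻¹)) * W
          = W * W⁻¹ * Sig * (W⁻¹ * W) := by simp only [Matrix.mul_assoc]
        _ = Sig := by
            rw [mul_nonsing_inv _ hWunit, nonsing_inv_mul _ hWunit, Matrix.one_mul,
              Matrix.mul_one]
    -- conj helper
    have hconj : ∀ d : Fin p → ℝ, (∀ i, 0 ≤ d i) →
        (W * (U * diagonal d * star U) * W).PosSemidef := by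
      intro d hd
      have h1 := (posSemidef_diagonal_iff.mpr hd).mul_mul_conjTranspose_same U
      rw [← star_eq_conjTranspose] at h1
      have h2 := h1.mul_mul_conjTranspose_same W
      rwa [hW₁] at h2
    have hUconst : ∀ c : ℝ, U * diagonal (fun _ => c) * star U = c • 1 := by
      intro c
      rw [← smul_one_eq_diagonal, mul_smul_comm, smul_mul_assoc, Matrix.mul_one, hU]
    have hdiagsub : ∀ (c : ℝ) (d : Fin p → ℝ),
        U * diagonal (fun i => d i - c) * star U
          = U * diagonal d * star U - c • 1 := by
      intro c d
      have : diagonal (fun i => d i - c) = diagonal d - diagonal (fun _ => c) := by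
        rw [diagonal_sub]
      rw [this, Matrix.mul_sub, Matrix.sub_mul, hUconst]
    constructor
    · have hid : W * (T⁻¹ - b⁻¹ • (1 : Matrix (Fin p) (Fin p) ℝ)) * W = Sig - b⁻¹ • S := by
        rw [Matrix.mul_sub, Matrix.sub_mul, hWTW, mul_smul_comm, Matrix.mul_one,
          smul_mul_assoc, hWW]
      rw [← hid, hTinv, ← hdiagsub]
      refine hconj _ fun i => ?_
      have hb : 0 < b := lt_of_lt_of_le ha (le_trans (hfa i) (hfb i))
      have := inv_anti₀ (hf i) (hfb i)
      linarith
    · have hdiagsub' : ∀ (c : ℝ) (d : Fin p → ℝ),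
          U * diagonal (fun i => c - d i) * star U
            = c • 1 - U * diagonal d * star U := by
        intro c d
        have : diagonal (fun i => c - d i) = diagonal (fun _ : Fin p => c) - diagonal d := by
          rw [diagonal_sub]
        rw [this, Matrix.mul_sub, Matrix.sub_mul, hUconst]
      have hid2 : W * (a⁻¹ • (1 : Matrix (Fin p) (Fin p) ℝ) - T⁻¹) * W = a⁻¹ • S - Sig := by
        rw [Matrix.mul_sub, Matrix.sub_mul, hWTW, mul_smul_comm, Matrix.mul_one,
          smul_mul_assoc, hWW]
      rw [← hid2, hTinv, ← hdiagsub']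
      refine hconj _ fun i => ?_
      have := inv_anti₀ ha (hfa i)
      linarith
end Helpers

attribute [local instance] Matrix.normedAddCommGroup Matrix.normedSpace

theorem mle_exists {p : ℕ} (S : Matrix (Fin p) (Fin p) ℝ) (hS : S.PosDef)
    (M : Set (Matrix (Fin p) (Fin p) ℝ)) (hMne : M.Nonempty)
    (hMsub : ∀ Sig ∈ M, Sig.PosDef)
    (hMclosed : ∃ C : Set (Matrix (Fin p) (Fin p) ℝ),
      IsClosed C ∧ M = C ∩ {Sig | Sig.PosDef}) :
    ∃ Sig0 ∈ M, ∀ Sig ∈ M,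
      Real.log (S * Sig⁻¹).det - (S * Sig⁻¹).trace + p ≤
        Real.log (S * Sig0⁻¹).det - (S * Sig0⁻¹).trace + p := by
  classical
  obtain ⟨Sig1, hSig1M⟩ := hMne
  rcases Nat.eq_zero_or_pos p with hp0 | hp
  · refine ⟨Sig1, hSig1M, fun Sig hSig => ?_⟩
    have h : Sig = Sig1 := by
      subst hp0; ext i j; exact i.elim0
    rw [h]
  have hp1 : 1 ≤ p := hp
  obtain ⟨C, hC, hMC⟩ := hMclosed
  set ℓ : Matrix (Fin p) (Fin p) ℝ → ℝ :=
    fun A => Real.log (S * A⁻¹).det - (S * A⁻¹).trace with hldef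
  -- continuity of ℓ at positive definite matrices
  have hcontAt : ∀ A : Matrix (Fin p) (Fin p) ℝ, A.PosDef → ContinuousAt ℓ A := by
    intro A hA
    have hdetA : A.det ≠ 0 := hA.det_pos.ne'
    have hinv : ContinuousAt (fun B : Matrix (Fin p) (Fin p) ℝ => B⁻¹) A := by
      have heq : (fun B : Matrix (Fin p) (Fin p) ℝ => B⁻¹)
          = fun B => Ring.inverse B.det • B.adjugate := funext fun B => Matrix.inv_def B
      rw [heq]
      simp only [Ring.inverse_eq_inv']
      exact ((continuous_id.matrix_det).continuousAt.inv₀ hdetA).smul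
        (continuous_id.matrix_adjugate).continuousAt
    have hmul : ContinuousAt (fun B : Matrix (Fin p) (Fin p) ℝ => S * B⁻¹) A :=
      ((continuous_const.matrix_mul continuous_id).continuousAt).comp hinv
    have hdetpos : (0:ℝ) < (S * A⁻¹).det := by
      rw [det_mul]; exact mul_pos hS.det_pos hA.inv.det_pos
    have hdetcont : Continuous (Matrix.det : Matrix (Fin p) (Fin p) ℝ → ℝ) :=
      continuous_id.matrix_det
    have htrcont : Continuous (Matrix.trace : Matrix (Fin p) (Fin p) ℝ → ℝ) :=
      continuous_id.matrix_trace
    have hdetAt : ContinuousAt (fun B : Matrix (Fin p) (Fin p) ℝ => (S * B⁻¹).det) A :=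
      hdetcont.continuousAt.comp hmul
    have hlog : ContinuousAt (fun B : Matrix (Fin p) (Fin p) ℝ =>
        Real.log (S * B⁻¹).det) A :=
      ContinuousAt.comp (g := Real.log)
        (f := fun B : Matrix (Fin p) (Fin p) ℝ => (S * B⁻¹).det) (x := A)
        (Real.continuousAt_log hdetpos.ne') hdetAt
    have htrc : ContinuousAt (fun B : Matrix (Fin p) (Fin p) ℝ => (S * B⁻¹).trace) A :=
      htrcont.continuousAt.comp hmul
    exact hlog.sub htrc
  set c : ℝ := ℓ Sig1 with hcdef
  -- c ≤ -p
  obtain ⟨f1, hf1pos, hf1eq, _⟩ := my_key S Sig1 hS (hMsub _ hSig1M)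
  have hcsum : c = ∑ i, (Real.log (f1 i) - f1 i) := hf1eq
  have hcle : c ≤ -(p:ℝ) := by
    rw [hcsum]
    have h1 : ∑ i, (Real.log (f1 i) - f1 i) ≤ (Finset.univ : Finset (Fin p)).card • (-1:ℝ) :=
      Finset.sum_le_card_nsmul _ _ _ (fun i _ => by
        have := Real.log_le_sub_one_of_pos (hf1pos i); linarith)
    have h2 : ((Finset.univ : Finset (Fin p)).card • (-1:ℝ)) = -(p:ℝ) := by
      simp [nsmul_eq_mul, Finset.card_univ]
    rw [h2] at h1
    exact h1
  set a₀ : ℝ := Real.exp (c + ↑p - 1) with ha₀def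
  set b₀ : ℝ := 2 * (Real.log 2 - 1 - (c + ↑p - 1)) with hb₀def
  have ha₀ : 0 < a₀ := Real.exp_pos _
  have hb₀ : 0 < b₀ := by
    have hlog2 : 0 < Real.log 2 := Real.log_pos (by norm_num)
    have hple : (1:ℝ) ≤ (p:ℝ) := by exact_mod_cast hp1
    rw [hb₀def]
    nlinarith [hcle, hlog2, hple]
  -- membership in the sandwich set
  have hmem_D : ∀ Sig, Sig.PosDef → c ≤ ℓ Sig →
      (Sig - b₀⁻¹ • S).PosSemidef ∧ (a₀⁻¹ • S - Sig).PosSemidef := by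
    intro Sig hSigPD hcle2
    obtain ⟨f, hfpos, hfeq, hsand⟩ := my_key S Sig hS hSigPD
    have hbound : ∀ j, a₀ ≤ f j ∧ f j ≤ b₀ := by
      intro j
      have hrest : ∑ i ∈ Finset.univ.erase j, (Real.log (f i) - f i)
          ≤ (Finset.univ.erase j).card • (-1:ℝ) :=
        Finset.sum_le_card_nsmul _ _ _ (fun i _ => by
          have := Real.log_le_sub_one_of_pos (hfpos i); linarith)
      have hcard : ((Finset.univ.erase j).card • (-1:ℝ)) = -((p:ℝ) - 1) := by
        rw [Finset.card_erase_of_mem (Finset.mem_univ j), Finset.card_univ, Fintype.card_fin,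
          nsmul_eq_mul, Nat.cast_sub hp1]
        ring
      rw [hcard] at hrest
      have hsplit : (Real.log (f j) - f j) + ∑ i ∈ Finset.univ.erase j,
          (Real.log (f i) - f i) = ∑ i, (Real.log (f i) - f i) :=
        Finset.add_sum_erase _ (fun i => Real.log (f i) - f i) (Finset.mem_univ j)
      have hc2 : c ≤ ∑ i, (Real.log (f i) - f i) := by rw [← hfeq]; exact hcle2
      have hgj : c + (p:ℝ) - 1 ≤ Real.log (f j) - f j := by linarith
      exact my_scalar_bound (hfpos j) hgj
    exact hsand a₀ b₀ ha₀ (fun i => (hbound i).1) (fun i => (hbound i).2)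
  set D : Set (Matrix (Fin p) (Fin p) ℝ) :=
    {Sig | (Sig - b₀⁻¹ • S).PosSemidef ∧ (a₀⁻¹ • S - Sig).PosSemidef} with hDdef
  have hDclosed : IsClosed D := by
    have h1 : IsClosed ((fun Sig : Matrix (Fin p) (Fin p) ℝ => Sig - b₀⁻¹ • S) ⁻¹'
        {A : Matrix (Fin p) (Fin p) ℝ | A.PosSemidef}) :=
      my_isClosed_posSemidef.preimage (continuous_id.sub continuous_const)
    have h2 : IsClosed ((fun Sig : Matrix (Fin p) (Fin p) ℝ => a₀⁻¹ • S - Sig) ⁻¹'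
        {A : Matrix (Fin p) (Fin p) ℝ | A.PosSemidef}) :=
      my_isClosed_posSemidef.preimage (continuous_const.sub continuous_id)
    exact h1.inter h2
  have hDpd : ∀ Sig ∈ D, Sig.PosDef := by
    intro Sig hSigD
    have h1 : (b₀⁻¹ • S).PosDef := my_posDef_smul hS (by positivity)
    have h2 := Matrix.PosDef.posSemidef_add hSigD.1 h1
    rwa [sub_add_cancel] at h2
  -- D is bounded
  have hDsubB : D ⊆ Metric.closedBall 0 (a₀⁻¹ * ‖S‖) := by
    intro Sig hSigD
    have hSigPD := hDpd Sig hSigD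
    have hpsd := hSigPD.posSemidef
    rw [Metric.mem_closedBall, dist_zero_right]
    have hnormS : (0:ℝ) ≤ ‖S‖ := norm_nonneg _
    rw [Matrix.norm_le_iff (by positivity)]
    intro i j
    have hdiag : ∀ k, Sig k k ≤ a₀⁻¹ * S k k := by
      intro k
      have h := my_psd_diag hSigD.2 k
      have : (a₀⁻¹ • S - Sig) k k = a₀⁻¹ * S k k - Sig k k := by
        simp [Matrix.sub_apply, Matrix.smul_apply, smul_eq_mul]
      rw [this] at h
      linarith
    have hentry := my_psd_entry hpsd i j
    have hSentry : ∀ k : Fin p, S k k ≤ ‖S‖ := by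
      intro k
      have := Matrix.norm_entry_le_entrywise_sup_norm S (i := k) (j := k)
      rw [Real.norm_eq_abs] at this
      exact le_trans (le_abs_self _) this
    have ha₀inv : 0 < a₀⁻¹ := by positivity
    rw [Real.norm_eq_abs]
    have h1 : Sig i i ≤ a₀⁻¹ * ‖S‖ := le_trans (hdiag i)
      (by nlinarith [hSentry i])
    have h2 : Sig j j ≤ a₀⁻¹ * ‖S‖ := le_trans (hdiag j)
      (by nlinarith [hSentry j])
    calc |Sig i j| ≤ (Sig i i + Sig j j) / 2 := hentry
      _ ≤ a₀⁻¹ * ‖S‖ := by linarith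
  have hDcompact : IsCompact D :=
    IsCompact.of_isClosed_subset (isCompact_closedBall 0 _) hDclosed hDsubB
  set A : Set (Matrix (Fin p) (Fin p) ℝ) := D ∩ C with hAdef
  have hAcompact : IsCompact A := hDcompact.inter_right hC
  have hcontA : ContinuousOn ℓ A := fun x hx =>
    (hcontAt x (hDpd x hx.1)).continuousWithinAt
  set K : Set (Matrix (Fin p) (Fin p) ℝ) := A ∩ ℓ ⁻¹' Set.Ici c with hKdef
  have hKcompact : IsCompact K := by
    haveI : CompactSpace A := isCompact_iff_compactSpace.mp hAcompact
    have h1 : Continuous (A.restrict ℓ) := hcontA.restrict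
    have h2 : IsClosed (A.restrict ℓ ⁻¹' Set.Ici c) := isClosed_Ici.preimage h1
    have h3 : IsCompact (Subtype.val '' (A.restrict ℓ ⁻¹' Set.Ici c)) :=
      h2.isCompact.image continuous_subtype_val
    have h4 : Subtype.val '' (A.restrict ℓ ⁻¹' Set.Ici c) = A ∩ ℓ ⁻¹' Set.Ici c :=
      Subtype.image_preimage_coe A (ℓ ⁻¹' Set.Ici c)
    rwa [h4] at h3
  have hMK : ∀ Sig ∈ M, c ≤ ℓ Sig → Sig ∈ K := by
    intro Sig hSigM hc2
    have hPD := hMsub Sig hSigM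
    have hDm : Sig ∈ D := hmem_D Sig hPD hc2
    have hCm : Sig ∈ C := by rw [hMC] at hSigM; exact hSigM.1
    exact ⟨⟨hDm, hCm⟩, hc2⟩
  have hSig1K : Sig1 ∈ K := hMK Sig1 hSig1M le_rfl
  have hKne : K.Nonempty := ⟨Sig1, hSig1K⟩
  have hcontK : ContinuousOn ℓ K := hcontA.mono Set.inter_subset_left
  obtain ⟨Sig0, hSig0K, hmax⟩ := hKcompact.exists_isMaxOn hKne hcontK
  have hSig0M : Sig0 ∈ M := by
    rw [hMC]
    exact ⟨hSig0K.1.2, hDpd Sig0 hSig0K.1.1⟩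
  refine ⟨Sig0, hSig0M, fun Sig hSigM => ?_⟩
  have hfin : ℓ Sig ≤ ℓ Sig0 := by
    by_cases hcase : c ≤ ℓ Sig
    · exact hmax (hMK Sig hSigM hcase)
    · have h1 : ℓ Sig ≤ c := le_of_not_ge hcase
      have h2 : c ≤ ℓ Sig0 := hmax hSig1K
      linarith
  have : ℓ Sig + (p:ℝ) ≤ ℓ Sig0 + (p:ℝ) := add_le_add_left hfin _
  exact this
end

section
/- Let S be a p×p positive definite real symmetric matrix and c ∈ ℝ. Then the set {Σ positive definite : log det(S Σ⁻¹) - tr(S Σ⁻¹) + p ≥ c} is a compact subset of the space of symmetric p×p matrices. -/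
set_option linter.unusedSectionVars false
open Matrix

section helpers
variable {n : Type*} [Fintype n] [DecidableEq n]

lemma herm_conj_diag (A : Matrix n n ℝ) (hA : A.IsHermitian) (α : ℝ) :
    A - α • 1 = (hA.eigenvectorUnitary : Matrix n n ℝ) *
      diagonal (fun i => hA.eigenvalues i - α) * star (hA.eigenvectorUnitary : Matrix n n ℝ) := by
  have hU : (hA.eigenvectorUnitary : Matrix n n ℝ) * star (hA.eigenvectorUnitary : Matrix n n ℝ)
      = 1 := (Matrix.mem_unitaryGroup_iff).mp hA.eigenvectorUnitary.2
  have hd : diagonal (fun i => hA.eigenvalues i - α)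
      = diagonal (RCLike.ofReal ∘ hA.eigenvalues) - α • (1 : Matrix n n ℝ) := by
    rw [smul_one_eq_diagonal, ← diagonal_sub]
    simp [RCLike.ofReal_real_eq_id]
  rw [hd, mul_sub, sub_mul, ← hA.spectral_theorem.trans (Unitary.conjStarAlgAut_apply _ _)]
  congr 1
  rw [mul_smul_comm, mul_one, smul_mul_assoc, hU]

lemma sub_smul_psd {A : Matrix n n ℝ} (hA : A.IsHermitian) {α : ℝ}
    (h : ∀ i, α ≤ hA.eigenvalues i) : (A - α • 1).PosSemidef := by
  rw [herm_conj_diag A hA α]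
  exact (Matrix.PosSemidef.diagonal (fun i => sub_nonneg.2 (h i))).mul_mul_conjTranspose_same _

lemma smul_sub_psd {A : Matrix n n ℝ} (hA : A.IsHermitian) {β : ℝ}
    (h : ∀ i, hA.eigenvalues i ≤ β) : (β • 1 - A).PosSemidef := by
  have key : β • (1 : Matrix n n ℝ) - A = (hA.eigenvectorUnitary : Matrix n n ℝ) *
      diagonal (fun i => β - hA.eigenvalues i) * star (hA.eigenvectorUnitary : Matrix n n ℝ) := by
    have h1 : β • (1 : Matrix n n ℝ) - A = -(A - β • 1) := (neg_sub _ _).symm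
    have hd : diagonal (fun i => β - hA.eigenvalues i)
        = - diagonal (fun i => hA.eigenvalues i - β) := by
      ext i j
      by_cases hij : i = j <;> simp [diagonal, hij]
    rw [h1, herm_conj_diag A hA β, hd, mul_neg, neg_mul]
  rw [key]
  exact (Matrix.PosSemidef.diagonal (fun i => sub_nonneg.2 (h i))).mul_mul_conjTranspose_same _

lemma psd_quad {M : Matrix n n ℝ} (hM : M.PosSemidef) (x : n → ℝ) : 0 ≤ x ⬝ᵥ M *ᵥ x := by
  simpa using hM.dotProduct_mulVec_nonneg x

lemma quad_lower {A : Matrix n n ℝ} (hA : A.IsHermitian) {α : ℝ}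
    (h : ∀ i, α ≤ hA.eigenvalues i) (x : n → ℝ) : α * (x ⬝ᵥ x) ≤ x ⬝ᵥ A *ᵥ x := by
  have := psd_quad (sub_smul_psd hA h) x
  rw [sub_mulVec, dotProduct_sub, smul_mulVec, one_mulVec, dotProduct_smul] at this
  simpa [smul_eq_mul] using sub_nonneg.mp this

lemma quad_upper {A : Matrix n n ℝ} (hA : A.IsHermitian) {β : ℝ}
    (h : ∀ i, hA.eigenvalues i ≤ β) (x : n → ℝ) : x ⬝ᵥ A *ᵥ x ≤ β * (x ⬝ᵥ x) := by
  have := psd_quad (smul_sub_psd hA h) x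
  rw [sub_mulVec, dotProduct_sub, smul_mulVec, one_mulVec, dotProduct_smul] at this
  simpa [smul_eq_mul] using sub_nonneg.mp this

lemma trace_eq_sum_eig {A : Matrix n n ℝ} (hA : A.IsHermitian) :
    A.trace = ∑ i, hA.eigenvalues i := by
  have hU : star (hA.eigenvectorUnitary : Matrix n n ℝ) * (hA.eigenvectorUnitary : Matrix n n ℝ)
      = 1 := (Matrix.mem_unitaryGroup_iff').mp hA.eigenvectorUnitary.2
  conv_lhs => rw [hA.spectral_theorem]
  rw [Unitary.conjStarAlgAut_apply, trace_mul_cycle, hU, one_mul, trace_diagonal]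
  simp [RCLike.ofReal_real_eq_id]

lemma dot_self_pos {x : n → ℝ} (hx : x ≠ 0) : 0 < x ⬝ᵥ x := by
  obtain ⟨j, hj⟩ := Function.ne_iff.mp hx
  exact Finset.sum_pos' (fun i _ => mul_self_nonneg _)
    ⟨j, Finset.mem_univ j, mul_self_pos.2 hj⟩

lemma dot_self_nonneg' (x : n → ℝ) : 0 ≤ x ⬝ᵥ x :=
  Finset.sum_nonneg fun i _ => mul_self_nonneg _

lemma herm_mulVec_dot {T : Matrix n n ℝ} (hT : T.IsHermitian) (x z : n → ℝ) :
    (T *ᵥ x) ⬝ᵥ z = x ⬝ᵥ (T *ᵥ z) := by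
  have hTt : Tᵀ = T := by
    rw [← Matrix.conjTranspose_eq_transpose_of_trivial, hT.eq]
  have h2 : x ᵥ* T = T *ᵥ x := by
    calc x ᵥ* T = x ᵥ* Tᵀ := by rw [hTt]
    _ = T *ᵥ x := vecMul_transpose T x
  rw [dotProduct_mulVec x T z, h2]

lemma dot_sq_le (u v : n → ℝ) : (u ⬝ᵥ v) ^ 2 ≤ (u ⬝ᵥ u) * (v ⬝ᵥ v) := by
  simpa [dotProduct, sq] using Finset.sum_mul_sq_le_sq_mul_sq Finset.univ u v

lemma posdef_conj {A : Matrix n n ℝ} (hA : A.PosDef) {R : Matrix n n ℝ}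
    (hR : R.IsHermitian) (hdR : IsUnit R.det) : (R * A * R).PosDef := by
  refine PosDef.of_dotProduct_mulVec_pos ?_ ?_
  · show (R * A * R)ᴴ = R * A * R
    rw [conjTranspose_mul, conjTranspose_mul, hA.1.eq, hR.eq, mul_assoc]
  · intro x hx
    have hRu : IsUnit R := (isUnit_iff_isUnit_det R).2 hdR
    have hRx : R *ᵥ x ≠ 0 := by
      intro h
      apply hx
      have hinj := Matrix.mulVec_injective_iff_isUnit.mpr hRu
      have : R *ᵥ x = R *ᵥ 0 := by simpa using h
      exact hinj this
    have hq := hA.dotProduct_mulVec_pos hRx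
    simp only [star_trivial] at hq ⊢
    have : x ⬝ᵥ (R * A * R) *ᵥ x = (R *ᵥ x) ⬝ᵥ A *ᵥ (R *ᵥ x) := by
      rw [← mulVec_mulVec, ← mulVec_mulVec, ← herm_mulVec_dot hR]
    rw [this]
    exact hq

lemma quad_single (A : Matrix n n ℝ) (i j : n) :
    (Pi.single i 1 : n → ℝ) ⬝ᵥ A *ᵥ (Pi.single j 1) = A i j := by
  simp [dotProduct, Matrix.mulVec, Pi.single_apply, mul_ite, ite_mul,
    Finset.sum_ite_eq', Finset.sum_ite_eq]

lemma single_dot_single (i j : n) :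
    (Pi.single i 1 : n → ℝ) ⬝ᵥ (Pi.single j 1 : n → ℝ) = if i = j then 1 else 0 := by
  simp [dotProduct, Pi.single_apply, mul_ite, ite_mul, Finset.sum_ite_eq',
    Finset.sum_ite_eq, eq_comm]

end helpers
open Matrix
open scoped MatrixOrder

lemma sig_quad_bounds {p : ℕ} {S Sig : Matrix (Fin p) (Fin p) ℝ} (hS : S.PosDef)
    (hSig : Sig.PosDef) {c : ℝ}
    (hc : c ≤ Real.log (S * Sig⁻¹).det - (S * Sig⁻¹).trace + p)
    {sm sM : ℝ} (hsm : 0 < sm) (hsM : 0 < sM)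
    (hSl : ∀ x : Fin p → ℝ, sm * (x ⬝ᵥ x) ≤ x ⬝ᵥ S⁻¹ *ᵥ x)
    (hSu : ∀ x : Fin p → ℝ, x ⬝ᵥ S⁻¹ *ᵥ x ≤ sM * (x ⬝ᵥ x)) :
    ∀ x : Fin p → ℝ,
      (1 / (2 * max 1 (1 - c) * sM)) * (x ⬝ᵥ x) ≤ x ⬝ᵥ Sig *ᵥ x ∧
      x ⬝ᵥ Sig *ᵥ x ≤ (1 / (Real.exp (-(max 1 (1 - c))) * sm)) * (x ⬝ᵥ x) := by
  set B : ℝ := max 1 (1 - c) with hBdef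
  have hB1 : (1 : ℝ) ≤ B := le_max_left _ _
  set α : ℝ := Real.exp (-B) with hαdef
  set β : ℝ := 2 * B with hβdef
  have hα : 0 < α := Real.exp_pos _
  have hβ : 0 < β := by simp only [hβdef]; linarith
  -- the square root of S
  set R : Matrix (Fin p) (Fin p) ℝ := CFC.sqrt S with hRdef
  have hRh : R.IsHermitian := (CFC.sqrt_nonneg S).posSemidef.isHermitian
  have hRR : R * R = S := CFC.sqrt_mul_sqrt_self S hS.posSemidef.nonneg
  have hdetR : IsUnit R.det := by
    have h1 : R.det * R.det = S.det := by rw [← det_mul, hRR]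
    have h2 : R.det ≠ 0 := by
      intro h
      rw [h, mul_zero] at h1
      exact hS.det_pos.ne' h1.symm
    exact isUnit_iff_ne_zero.2 h2
  have hR1 : R * R⁻¹ = 1 := mul_nonsing_inv R hdetR
  have hR2 : R⁻¹ * R = 1 := nonsing_inv_mul R hdetR
  have hRinvh : R⁻¹.IsHermitian := hRh.inv
  -- M and its positivity
  set M : Matrix (Fin p) (Fin p) ℝ := R * Sig⁻¹ * R with hMdef
  have hMpd : M.PosDef := posdef_conj hSig.inv hRh hdetR
  -- determinant and trace transfer
  have hdet : (S * Sig⁻¹).det = M.det := by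
    rw [hMdef, det_mul, det_mul, det_mul, ← hRR, det_mul]
    ring
  have htr : (S * Sig⁻¹).trace = M.trace := by
    rw [← hRR, mul_assoc, trace_mul_comm, hMdef, mul_assoc]
  -- eigenvalues of M
  have hμpos : ∀ i, 0 < hMpd.1.eigenvalues i := hMpd.eigenvalues_pos
  have hlogdet : Real.log M.det = ∑ i, Real.log (hMpd.1.eigenvalues i) := by
    have h1 : M.det = ∏ i, hMpd.1.eigenvalues i := by
      have := hMpd.1.det_eq_prod_eigenvalues
      simpa [RCLike.ofReal_real_eq_id] using this
    rw [h1, Real.log_prod (fun i _ => (hμpos i).ne')]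
  have htrace : M.trace = ∑ i, hMpd.1.eigenvalues i := trace_eq_sum_eig hMpd.1
  -- sum bound
  have hsum : ∑ i, (hMpd.1.eigenvalues i - Real.log (hMpd.1.eigenvalues i)) ≤ p - c := by
    rw [hdet, htr, hlogdet, htrace] at hc
    rw [Finset.sum_sub_distrib]
    linarith
  -- termwise bound
  have hterm : ∀ i, hMpd.1.eigenvalues i - Real.log (hMpd.1.eigenvalues i) ≤ B := by
    intro i
    have h1 : ∀ j, (1 : ℝ) ≤ hMpd.1.eigenvalues j - Real.log (hMpd.1.eigenvalues j) := by
      intro j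
      have := Real.log_le_sub_one_of_pos (hμpos j)
      linarith
    have h2 : ((p : ℝ) - 1) ≤
        ∑ j ∈ Finset.univ.erase i, (hMpd.1.eigenvalues j - Real.log (hMpd.1.eigenvalues j)) := by
      have hcard : (Finset.univ.erase i).card = p - 1 := by
        rw [Finset.card_erase_of_mem (Finset.mem_univ i)]
        simp
      have hle := Finset.card_nsmul_le_sum (Finset.univ.erase i)
        (fun j => hMpd.1.eigenvalues j - Real.log (hMpd.1.eigenvalues j)) 1
        (fun j _ => h1 j)
      rw [hcard, nsmul_eq_mul, mul_one] at hle
      have hp1 : (1 : ℕ) ≤ p := Fin.pos i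
      calc ((p : ℝ) - 1) = ((p - 1 : ℕ) : ℝ) := by
            rw [Nat.cast_sub hp1]; simp
        _ ≤ _ := hle
    have h3 := Finset.add_sum_erase Finset.univ
      (fun j => hMpd.1.eigenvalues j - Real.log (hMpd.1.eigenvalues j)) (Finset.mem_univ i)
    have h4 : hMpd.1.eigenvalues i - Real.log (hMpd.1.eigenvalues i) ≤ 1 - c := by
      rw [← h3] at hsum
      beta_reduce at hsum
      linarith
    have := le_max_right (1 : ℝ) (1 - c)
    linarith
  -- eigenvalue bounds
  have hμub : ∀ i, hMpd.1.eigenvalues i ≤ β := by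
    intro i
    have hpos := hμpos i
    have h2 : Real.log (hMpd.1.eigenvalues i / 2) ≤ hMpd.1.eigenvalues i / 2 - 1 :=
      Real.log_le_sub_one_of_pos (by positivity)
    have hl2 : Real.log 2 ≤ 1 := by
      have := Real.log_le_sub_one_of_pos (by norm_num : (0:ℝ) < 2); linarith
    have h3 : Real.log (hMpd.1.eigenvalues i)
        = Real.log (hMpd.1.eigenvalues i / 2) + Real.log 2 := by
      rw [← Real.log_mul (by positivity) (by norm_num)]
      congr 1
      ring
    have := hterm i
    simp only [hβdef]
    linarith
  have hμlb : ∀ i, α ≤ hMpd.1.eigenvalues i := by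
    intro i
    have h1 : -B ≤ Real.log (hMpd.1.eigenvalues i) := by
      have := hterm i
      have := (hμpos i).le
      linarith
    calc α = Real.exp (-B) := rfl
      _ ≤ Real.exp (Real.log (hMpd.1.eigenvalues i)) := Real.exp_le_exp.2 h1
      _ = hMpd.1.eigenvalues i := Real.exp_log (hμpos i)
  -- quadratic bounds on M
  have hMl : ∀ y, α * (y ⬝ᵥ y) ≤ y ⬝ᵥ M *ᵥ y := quad_lower hMpd.1 hμlb
  have hMu : ∀ y, y ⬝ᵥ M *ᵥ y ≤ β * (y ⬝ᵥ y) := quad_upper hMpd.1 hμub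
  -- quadratic bounds on Sig⁻¹
  have hSiginv : Sig⁻¹ = R⁻¹ * M * R⁻¹ := by
    have h1 : R⁻¹ * M * R⁻¹ = (R⁻¹ * R) * Sig⁻¹ * (R * R⁻¹) := by
      simp only [hMdef, Matrix.mul_assoc]
    rw [h1, hR1, hR2, one_mul, mul_one]
  have hq1 : ∀ x, x ⬝ᵥ Sig⁻¹ *ᵥ x = (R⁻¹ *ᵥ x) ⬝ᵥ M *ᵥ (R⁻¹ *ᵥ x) := by
    intro x
    rw [hSiginv, ← mulVec_mulVec, ← mulVec_mulVec, ← herm_mulVec_dot hRinvh]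
  have hnorm : ∀ x, (R⁻¹ *ᵥ x) ⬝ᵥ (R⁻¹ *ᵥ x) = x ⬝ᵥ S⁻¹ *ᵥ x := by
    intro x
    have h1 : R⁻¹ * R⁻¹ = S⁻¹ := by rw [← Matrix.mul_inv_rev, hRR]
    rw [herm_mulVec_dot hRinvh, mulVec_mulVec, h1]
  have ha' : 0 < α * sm := mul_pos hα hsm
  have hb' : 0 < β * sM := mul_pos hβ hsM
  have hSinvL : ∀ x, (α * sm) * (x ⬝ᵥ x) ≤ x ⬝ᵥ Sig⁻¹ *ᵥ x := by
    intro x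
    rw [hq1]
    calc (α * sm) * (x ⬝ᵥ x) = α * (sm * (x ⬝ᵥ x)) := by ring
      _ ≤ α * (x ⬝ᵥ S⁻¹ *ᵥ x) := by
          exact mul_le_mul_of_nonneg_left (hSl x) hα.le
      _ = α * ((R⁻¹ *ᵥ x) ⬝ᵥ (R⁻¹ *ᵥ x)) := by rw [hnorm]
      _ ≤ _ := hMl _
  have hSinvU : ∀ x, x ⬝ᵥ Sig⁻¹ *ᵥ x ≤ (β * sM) * (x ⬝ᵥ x) := by
    intro x
    rw [hq1]
    calc (R⁻¹ *ᵥ x) ⬝ᵥ M *ᵥ (R⁻¹ *ᵥ x) ≤ β * ((R⁻¹ *ᵥ x) ⬝ᵥ (R⁻¹ *ᵥ x)) := hMu _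
      _ = β * (x ⬝ᵥ S⁻¹ *ᵥ x) := by rw [hnorm]
      _ ≤ β * (sM * (x ⬝ᵥ x)) := mul_le_mul_of_nonneg_left (hSu x) hβ.le
      _ = (β * sM) * (x ⬝ᵥ x) := by ring
  -- final bounds on Sig
  intro x
  constructor
  · -- lower bound
    by_cases hx : x = 0
    · simp [hx]
    have hxx : 0 < x ⬝ᵥ x := dot_self_pos hx
    have hq : 0 < x ⬝ᵥ Sig *ᵥ x := by
      have := hSig.dotProduct_mulVec_pos hx
      simpa using this
    -- Cauchy-Schwarz with sqrt of Sig
    have hCS : (x ⬝ᵥ x) ^ 2 ≤ (x ⬝ᵥ Sig *ᵥ x) * (x ⬝ᵥ Sig⁻¹ *ᵥ x) := by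
      set T : Matrix (Fin p) (Fin p) ℝ := CFC.sqrt Sig with hTdef
      have hTh : T.IsHermitian := (CFC.sqrt_nonneg Sig).posSemidef.isHermitian
      have hTT : T * T = Sig := CFC.sqrt_mul_sqrt_self Sig hSig.posSemidef.nonneg
      have hdT : IsUnit T.det := by
        have h1 : T.det * T.det = Sig.det := by rw [← det_mul, hTT]
        refine isUnit_iff_ne_zero.2 (fun h => ?_)
        rw [h, mul_zero] at h1
        exact hSig.det_pos.ne' h1.symm
      have hTinvh : T⁻¹.IsHermitian := hTh.inv
      have h1 : (T *ᵥ x) ⬝ᵥ (T⁻¹ *ᵥ x) = x ⬝ᵥ x := by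
        rw [herm_mulVec_dot hTh, mulVec_mulVec, mul_nonsing_inv _ hdT, one_mulVec]
      have h2 : (T *ᵥ x) ⬝ᵥ (T *ᵥ x) = x ⬝ᵥ Sig *ᵥ x := by
        rw [herm_mulVec_dot hTh, mulVec_mulVec, hTT]
      have h3 : (T⁻¹ *ᵥ x) ⬝ᵥ (T⁻¹ *ᵥ x) = x ⬝ᵥ Sig⁻¹ *ᵥ x := by
        have h4 : T⁻¹ * T⁻¹ = Sig⁻¹ := by rw [← Matrix.mul_inv_rev, hTT]
        rw [herm_mulVec_dot hTinvh, mulVec_mulVec, h4]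
      calc (x ⬝ᵥ x) ^ 2 = ((T *ᵥ x) ⬝ᵥ (T⁻¹ *ᵥ x)) ^ 2 := by rw [h1]
        _ ≤ ((T *ᵥ x) ⬝ᵥ (T *ᵥ x)) * ((T⁻¹ *ᵥ x) ⬝ᵥ (T⁻¹ *ᵥ x)) := dot_sq_le _ _
        _ = (x ⬝ᵥ Sig *ᵥ x) * (x ⬝ᵥ Sig⁻¹ *ᵥ x) := by rw [h2, h3]
    have h5 : x ⬝ᵥ Sig⁻¹ *ᵥ x ≤ (β * sM) * (x ⬝ᵥ x) := hSinvU x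
    -- (x⬝x)^2 ≤ q * b' * (x⬝x) so (x⬝x) ≤ q * b' so q ≥ (x⬝x)/b'
    rw [div_mul_eq_mul_div, div_le_iff₀ (mul_pos (by linarith : (0:ℝ) < 2 * B) hsM)]
    have h6 : (x ⬝ᵥ x) ^ 2 ≤ (x ⬝ᵥ Sig *ᵥ x) * ((β * sM) * (x ⬝ᵥ x)) :=
      hCS.trans (mul_le_mul_of_nonneg_left h5 hq.le)
    show 1 * (x ⬝ᵥ x) ≤ (x ⬝ᵥ Sig *ᵥ x) * (β * sM)
    rw [one_mul]
    refine le_of_mul_le_mul_right ?_ hxx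
    calc (x ⬝ᵥ x) * (x ⬝ᵥ x) = (x ⬝ᵥ x) ^ 2 := (sq _).symm
      _ ≤ (x ⬝ᵥ Sig *ᵥ x) * ((β * sM) * (x ⬝ᵥ x)) := h6
      _ = (x ⬝ᵥ Sig *ᵥ x) * (β * sM) * (x ⬝ᵥ x) := by ring
  · -- upper bound
    set q := x ⬝ᵥ Sig *ᵥ x with hqdef
    set y := Sig *ᵥ x with hydef
    rcases le_or_gt q 0 with hq | hq
    · have h0 : 0 ≤ (1 / (α * sm)) * (x ⬝ᵥ x) :=
        mul_nonneg (one_div_nonneg.2 ha'.le) (dot_self_nonneg' x)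
      linarith
    have hxy : Sig⁻¹ *ᵥ y = x := by
      rw [hydef, mulVec_mulVec, nonsing_inv_mul _ (isUnit_iff_ne_zero.2 hSig.det_pos.ne'),
        one_mulVec]
    have h1 : (α * sm) * (y ⬝ᵥ y) ≤ y ⬝ᵥ Sig⁻¹ *ᵥ y := hSinvL y
    have h2 : y ⬝ᵥ Sig⁻¹ *ᵥ y = q := by
      rw [hxy, dotProduct_comm, hqdef, hydef]
    have hCS2 : q ^ 2 ≤ (x ⬝ᵥ x) * (y ⬝ᵥ y) := by
      have : q = x ⬝ᵥ y := rfl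
      rw [this]
      exact dot_sq_le x y
    rw [h2] at h1
    -- q^2 ≤ (x⬝x) * (y⬝y), (α*sm)*(y⬝y) ≤ q ⇒ q ≤ (x⬝x)/(α*sm)
    rw [div_mul_eq_mul_div, le_div_iff₀ ha']
    nlinarith [hCS2, h1, dot_self_nonneg' x, dot_self_nonneg' y]

theorem superlevel_set_compact {p : ℕ} (S : Matrix (Fin p) (Fin p) ℝ)
    (hS : S.PosDef) (c : ℝ) :
    IsCompact {Sig : Matrix (Fin p) (Fin p) ℝ | Sig.PosDef ∧
      c ≤ Real.log (S * Sig⁻¹).det - (S * Sig⁻¹).trace + p} := by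
  rcases Nat.eq_zero_or_pos p with hp | hp
  · subst hp
    exact (Set.toFinite _).isCompact
  haveI : Nonempty (Fin p) := ⟨⟨0, hp⟩⟩
  have hSinv : (S⁻¹).PosDef := hS.inv
  set sm : ℝ := Finset.univ.inf' Finset.univ_nonempty hSinv.1.eigenvalues with hsmdef
  set sM : ℝ := Finset.univ.sup' Finset.univ_nonempty hSinv.1.eigenvalues with hsMdef
  have hsm : 0 < sm := (Finset.lt_inf'_iff _).2 (fun i _ => hSinv.eigenvalues_pos i)
  have hsM : 0 < sM := by
    have i0 : Fin p := ⟨0, hp⟩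
    have h1 : sm ≤ hSinv.1.eigenvalues i0 := Finset.inf'_le _ (Finset.mem_univ i0)
    have h2 : hSinv.1.eigenvalues i0 ≤ sM := Finset.le_sup' _ (Finset.mem_univ i0)
    linarith
  have hSl : ∀ x : Fin p → ℝ, sm * (x ⬝ᵥ x) ≤ x ⬝ᵥ S⁻¹ *ᵥ x :=
    quad_lower hSinv.1 (fun i => Finset.inf'_le _ (Finset.mem_univ i))
  have hSu : ∀ x : Fin p → ℝ, x ⬝ᵥ S⁻¹ *ᵥ x ≤ sM * (x ⬝ᵥ x) :=
    quad_upper hSinv.1 (fun i => Finset.le_sup' _ (Finset.mem_univ i))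
  set a : ℝ := 1 / (2 * max 1 (1 - c) * sM) with hadef
  set b : ℝ := 1 / (Real.exp (-(max 1 (1 - c))) * sm) with hbdef
  have hmax1 : (1:ℝ) ≤ max 1 (1 - c) := le_max_left _ _
  have ha : 0 < a := by
    rw [hadef]
    have h2 : 0 < 2 * max 1 (1 - c) * sM := by nlinarith
    positivity
  have hb : 0 < b := by
    rw [hbdef]
    have h2 : 0 < Real.exp (-(max 1 (1 - c))) * sm := mul_pos (Real.exp_pos _) hsm
    positivity
  set D : Set (Matrix (Fin p) (Fin p) ℝ) :=
    {Sig | Sig.IsHermitian ∧ ∀ x : Fin p → ℝ, a * (x ⬝ᵥ x) ≤ x ⬝ᵥ Sig *ᵥ x} with hDdef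
  have hDpos : ∀ Sig ∈ D, Sig.PosDef := by
    rintro Sig ⟨hherm, hq⟩
    refine PosDef.of_dotProduct_mulVec_pos hherm (fun x hx => ?_)
    have h1 := hq x
    have h2 := dot_self_pos hx
    simp only [star_trivial]
    calc (0:ℝ) < a * (x ⬝ᵥ x) := mul_pos ha h2
      _ ≤ _ := h1
  have hset : {Sig : Matrix (Fin p) (Fin p) ℝ | Sig.PosDef ∧
      c ≤ Real.log (S * Sig⁻¹).det - (S * Sig⁻¹).trace + p}
      = D ∩ (fun Sig : Matrix (Fin p) (Fin p) ℝ =>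
          Real.log (S * Sig⁻¹).det - (S * Sig⁻¹).trace + p) ⁻¹' Set.Ici c := by
    ext Sig
    simp only [Set.mem_setOf_eq, Set.mem_inter_iff, Set.mem_preimage, Set.mem_Ici, hDdef]
    constructor
    · rintro ⟨h1, h2⟩
      exact ⟨⟨h1.1, fun x => (sig_quad_bounds hS h1 h2 hsm hsM hSl hSu x).1⟩, h2⟩
    · rintro ⟨⟨h1, h2⟩, h3⟩
      exact ⟨hDpos Sig ⟨h1, h2⟩, h3⟩
  have hDclosed : IsClosed D := by
    have h1 : IsClosed {Sig : Matrix (Fin p) (Fin p) ℝ | Sig.IsHermitian} :=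
      isClosed_eq (continuous_id.matrix_conjTranspose) continuous_id
    have h2 : ∀ x : Fin p → ℝ, IsClosed {Sig : Matrix (Fin p) (Fin p) ℝ |
        a * (x ⬝ᵥ x) ≤ x ⬝ᵥ Sig *ᵥ x} := fun x =>
      isClosed_le continuous_const
        (continuous_const.dotProduct (continuous_id.matrix_mulVec continuous_const))
    have heq : D = {Sig : Matrix (Fin p) (Fin p) ℝ | Sig.IsHermitian} ∩
        ⋂ x : Fin p → ℝ,
        {Sig : Matrix (Fin p) (Fin p) ℝ | a * (x ⬝ᵥ x) ≤ x ⬝ᵥ Sig *ᵥ x} := by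
      ext Sig
      simp only [hDdef, Set.mem_setOf_eq, Set.mem_inter_iff, Set.mem_iInter]
    rw [heq]
    exact h1.inter (isClosed_iInter h2)
  have hfc : ContinuousOn (fun Sig : Matrix (Fin p) (Fin p) ℝ =>
      Real.log (S * Sig⁻¹).det - (S * Sig⁻¹).trace + p) D := by
    have hdet0 : ∀ Sig ∈ D, Sig.det ≠ 0 := fun Sig h => (hDpos Sig h).det_pos.ne'
    have hinv : ContinuousOn (fun Sig : Matrix (Fin p) (Fin p) ℝ => Sig⁻¹) D := by
      have heq : (fun Sig : Matrix (Fin p) (Fin p) ℝ => Sig⁻¹)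
          = fun Sig => (Sig.det)⁻¹ • Sig.adjugate := by
        funext Sig
        rw [Matrix.inv_def, Ring.inverse_eq_inv']
      rw [heq]
      exact ((continuous_id.matrix_det).continuousOn.inv₀ hdet0).smul
        (continuous_id.matrix_adjugate).continuousOn
    have hdetSig : ContinuousOn (fun Sig : Matrix (Fin p) (Fin p) ℝ => (S * Sig⁻¹).det) D :=
      ((continuous_const.matrix_mul continuous_id).matrix_det).comp_continuousOn hinv
    have hdetpos : ∀ Sig ∈ D, 0 < (S * Sig⁻¹).det := by
      intro Sig h
      rw [det_mul]
      exact mul_pos hS.det_pos (hDpos Sig h).inv.det_pos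
    have hlog : ContinuousOn (fun Sig : Matrix (Fin p) (Fin p) ℝ =>
        Real.log (S * Sig⁻¹).det) D := hdetSig.log (fun Sig h => (hdetpos Sig h).ne')
    have htrc : ContinuousOn (fun Sig : Matrix (Fin p) (Fin p) ℝ => (S * Sig⁻¹).trace) D :=
      ((continuous_const.matrix_mul continuous_id).matrix_trace).comp_continuousOn hinv
    exact (hlog.sub htrc).add continuousOn_const
  have hclosed : IsClosed (D ∩ (fun Sig : Matrix (Fin p) (Fin p) ℝ =>
      Real.log (S * Sig⁻¹).det - (S * Sig⁻¹).trace + p) ⁻¹' Set.Ici c) :=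
    hfc.preimage_isClosed_of_isClosed hDclosed isClosed_Ici
  set K : Set (Matrix (Fin p) (Fin p) ℝ) :=
    {Sig | ∀ i j, Sig i j ∈ Set.Icc (-(2*b)) (2*b)} with hKdef
  have hK : IsCompact K := by
    have h1 : IsCompact (Set.univ.pi fun _ : Fin p =>
        (Set.univ.pi fun _ : Fin p => Set.Icc (-(2*b)) (2*b))) :=
      isCompact_univ_pi (fun _ => isCompact_univ_pi (fun _ => isCompact_Icc))
    have heq : K = (Set.univ.pi fun _ : Fin p =>
        (Set.univ.pi fun _ : Fin p => Set.Icc (-(2*b)) (2*b)) :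
        Set (Matrix (Fin p) (Fin p) ℝ)) := by
      ext Sig
      constructor
      · exact fun h i _ j _ => h i j
      · exact fun h i j => h i (Set.mem_univ i) j (Set.mem_univ j)
    rw [heq]
    exact h1
  have hsub : {Sig : Matrix (Fin p) (Fin p) ℝ | Sig.PosDef ∧
      c ≤ Real.log (S * Sig⁻¹).det - (S * Sig⁻¹).trace + p} ⊆ K := by
    rintro Sig ⟨h1, h2⟩
    have hq := sig_quad_bounds hS h1 h2 hsm hsM hSl hSu
    intro i j
    set u : Fin p → ℝ := Pi.single i 1 with hudef
    set v : Fin p → ℝ := Pi.single j 1 with hvdef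
    have huu : u ⬝ᵥ u = 1 := by simp [hudef, single_dot_single]
    have hvv : v ⬝ᵥ v = 1 := by simp [hvdef, single_dot_single]
    have huv : u ⬝ᵥ v = if i = j then 1 else 0 := single_dot_single i j
    have hd0 : (0:ℝ) ≤ u ⬝ᵥ v := by rw [huv]; split <;> norm_num
    have hd1 : u ⬝ᵥ v ≤ 1 := by rw [huv]; split <;> norm_num
    have e1 : u ⬝ᵥ Sig *ᵥ u = Sig i i := quad_single Sig i i
    have e2 : v ⬝ᵥ Sig *ᵥ v = Sig j j := quad_single Sig j j
    have e3 : u ⬝ᵥ Sig *ᵥ v = Sig i j := quad_single Sig i j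
    have e4 : v ⬝ᵥ Sig *ᵥ u = Sig j i := quad_single Sig j i
    have hji : Sig j i = Sig i j := by
      have := h1.1
      rw [Matrix.IsHermitian] at this
      calc Sig j i = Sigᴴ i j := by simp [Matrix.conjTranspose_apply]
        _ = Sig i j := by rw [this]
    have euv : (u + v) ⬝ᵥ Sig *ᵥ (u + v)
        = Sig i i + Sig i j + Sig i j + Sig j j := by
      rw [mulVec_add, dotProduct_add, add_dotProduct, add_dotProduct, e1, e2, e3, e4, hji]
      ring
    have duv : (u + v) ⬝ᵥ (u + v) = 2 + 2 * (u ⬝ᵥ v) := by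
      rw [dotProduct_add, add_dotProduct, add_dotProduct, huu, hvv, dotProduct_comm v u]
      ring
    have hq_uv := hq (u + v)
    have hq_u := hq u
    have hq_v := hq v
    rw [euv, duv] at hq_uv
    rw [e1, huu] at hq_u
    rw [e2, hvv] at hq_v
    constructor
    · -- -(2*b) ≤ Sig i j
      nlinarith [hq_uv.1, hq_u.2, hq_v.2, ha.le, hd0, hd1, hb.le]
    · nlinarith [hq_uv.2, hq_u.1, hq_v.1, ha.le, hd0, hd1, hb.le]
  rw [hset]
  exact hK.of_isClosed_subset hclosed (hset ▸ hsub)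
end
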